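/- For every real β > 0, every t ∈ ℝ, and X ~ N(0,1): E[(t − X)·(1 − β(t − X)²)·exp(−β(t − X)²)] = t·(1 + β − βt² − 2β²)·exp(−βt²/(2β+1))·(2β+1)^{−7/2}. -/

import Mathlib

open MeasureTheory ProbabilityTheory Real
open scoped ENNReal BigOperators

lemma my_integral_gaussianReal (f : ℝ → ℝ) :
    ∫ x, f x ∂(gaussianReal 0 1) = ∫ x, gaussianPDFReal 0 1 x * f x := by
  rw [gaussianReal_of_var_ne_zero 0 one_ne_zero]
  have : (gaussianPDF 0 1) = fun x => ((gaussianPDFReal 0 1 x).toNNReal : ℝ≥0∞) := rfl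
  rw [this, integral_withDensity_eq_integral_smul
    ((measurable_gaussianPDFReal 0 1).real_toNNReal) f]
  congr 1 with x
  simp [NNReal.smul_def, Real.coe_toNNReal _ (gaussianPDFReal_nonneg 0 1 x)]

lemma my_integrable_pow_mul_gauss {a : ℝ} (ha : 0 < a) (n : ℕ) :
    Integrable fun x : ℝ => x ^ n * exp (-a * x ^ 2) := by
  have hint : Integrable fun x : ℝ =>
      (n.factorial * exp (1 / (2 * a))) * exp (-(a / 2) * x ^ 2) :=
    (integrable_exp_neg_mul_sq (by positivity)).const_mul _
  refine hint.mono' (Measurable.aestronglyMeasurable (by measurability)) ?_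
  filter_upwards with x
  have h1 : |x| ^ n ≤ n.factorial * exp |x| := by
    have := Real.sum_le_exp_of_nonneg (abs_nonneg x) (n + 1)
    have h2 : |x| ^ n / n.factorial ≤ ∑ i ∈ Finset.range (n + 1), |x| ^ i / i.factorial := by
      exact Finset.single_le_sum (f := fun i => |x| ^ i / i.factorial)
        (fun i _ => by positivity) (Finset.self_mem_range_succ n)
    have h3 : |x| ^ n / n.factorial ≤ exp |x| := h2.trans this
    calc |x| ^ n = n.factorial * (|x| ^ n / n.factorial) := by
          field_simp
      _ ≤ n.factorial * exp |x| := by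
          exact mul_le_mul_of_nonneg_left h3 (by positivity)
  have h6 : |x| ≤ (1 + a ^ 2 * x ^ 2) / (2 * a) := by
    rw [le_div_iff₀ (by positivity)]
    nlinarith [sq_nonneg (a * |x| - 1), sq_abs x]
  have h4 : |x| - a * x ^ 2 ≤ 1 / (2 * a) + (-(a / 2) * x ^ 2) := by
    calc |x| - a * x ^ 2 ≤ (1 + a ^ 2 * x ^ 2) / (2 * a) - a * x ^ 2 :=
          sub_le_sub_right h6 _
      _ = 1 / (2 * a) + (-(a / 2) * x ^ 2) := by field_simp; ring
  calc ‖x ^ n * exp (-a * x ^ 2)‖ = |x| ^ n * exp (-a * x ^ 2) := by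
        rw [norm_mul, norm_pow, Real.norm_eq_abs, Real.norm_eq_abs, abs_exp]
    _ ≤ (n.factorial * exp |x|) * exp (-a * x ^ 2) := by
        exact mul_le_mul_of_nonneg_right h1 (exp_pos _).le
    _ = n.factorial * exp (|x| - a * x ^ 2) := by
        rw [mul_assoc, ← Real.exp_add]; ring_nf
    _ ≤ n.factorial * exp (1 / (2 * a) + (-(a / 2) * x ^ 2)) := by
        exact mul_le_mul_of_nonneg_left (exp_le_exp.mpr h4) (by positivity)
    _ = n.factorial * exp (1 / (2 * a)) * exp (-(a / 2) * x ^ 2) := by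
        rw [Real.exp_add]; ring


lemma my_gauss_moment_one {a : ℝ} (ha : 0 < a) :
    ∫ x : ℝ, x * exp (-a * x ^ 2) = 0 := by
  have hder : ∀ x : ℝ, HasDerivAt (fun x : ℝ => -(1 / (2 * a)) * exp (-a * x ^ 2))
      (x * exp (-a * x ^ 2)) x := by
    intro x
    have h := (((hasDerivAt_pow 2 x).const_mul (-a)).exp).const_mul (-(1 / (2 * a)))
    refine h.congr_deriv ?_
    field_simp
    ring
  have h1 : Integrable fun x : ℝ => x * exp (-a * x ^ 2) := by
    simpa using my_integrable_pow_mul_gauss ha 1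
  have h0 : Integrable fun x : ℝ => -(1 / (2 * a)) * exp (-a * x ^ 2) :=
    (integrable_exp_neg_mul_sq ha).const_mul _
  exact integral_eq_zero_of_hasDerivAt_of_integrable hder h1 h0

lemma my_gauss_moment_two {a : ℝ} (ha : 0 < a) :
    ∫ x : ℝ, x ^ 2 * exp (-a * x ^ 2) = Real.sqrt (π / a) / (2 * a) := by
  have hder : ∀ x : ℝ, HasDerivAt (fun x : ℝ => x * exp (-a * x ^ 2))
      (exp (-a * x ^ 2) - 2 * a * (x ^ 2 * exp (-a * x ^ 2))) x := by
    intro x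
    have h := (hasDerivAt_id x).mul (((hasDerivAt_pow 2 x).const_mul (-a)).exp)
    refine h.congr_deriv ?_
    simp
    ring
  have h2 : Integrable fun x : ℝ => x ^ 2 * exp (-a * x ^ 2) :=
    my_integrable_pow_mul_gauss ha 2
  have h0 : Integrable fun x : ℝ => exp (-a * x ^ 2) := integrable_exp_neg_mul_sq ha
  have h1 : Integrable fun x : ℝ => x * exp (-a * x ^ 2) := by
    simpa using my_integrable_pow_mul_gauss ha 1
  have hz : ∫ x : ℝ, (exp (-a * x ^ 2) - 2 * a * (x ^ 2 * exp (-a * x ^ 2))) = 0 :=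
    integral_eq_zero_of_hasDerivAt_of_integrable hder (h0.sub ((h2.const_mul _))) h1
  rw [integral_sub h0 (h2.const_mul _), integral_const_mul, integral_gaussian,
    sub_eq_zero] at hz
  rw [eq_div_iff (by positivity : (2*a:ℝ) ≠ 0)]
  linarith [hz]

lemma my_gauss_moment_three {a : ℝ} (ha : 0 < a) :
    ∫ x : ℝ, x ^ 3 * exp (-a * x ^ 2) = 0 := by
  have hder : ∀ x : ℝ, HasDerivAt (fun x : ℝ => x ^ 2 * exp (-a * x ^ 2))
      (2 * (x * exp (-a * x ^ 2)) - 2 * a * (x ^ 3 * exp (-a * x ^ 2))) x := by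
    intro x
    have h := (hasDerivAt_pow 2 x).mul (((hasDerivAt_pow 2 x).const_mul (-a)).exp)
    refine h.congr_deriv ?_
    simp
    ring
  have h3 : Integrable fun x : ℝ => x ^ 3 * exp (-a * x ^ 2) :=
    my_integrable_pow_mul_gauss ha 3
  have h2 : Integrable fun x : ℝ => x ^ 2 * exp (-a * x ^ 2) :=
    my_integrable_pow_mul_gauss ha 2
  have h1 : Integrable fun x : ℝ => x * exp (-a * x ^ 2) := by
    simpa using my_integrable_pow_mul_gauss ha 1
  have hz : ∫ x : ℝ, (2 * (x * exp (-a * x ^ 2)) - 2 * a * (x ^ 3 * exp (-a * x ^ 2))) = 0 :=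
    integral_eq_zero_of_hasDerivAt_of_integrable hder
      ((h1.const_mul 2).sub (h3.const_mul _)) h2
  rw [integral_sub (h1.const_mul 2) (h3.const_mul _), integral_const_mul, integral_const_mul,
    my_gauss_moment_one ha, sub_eq_zero] at hz
  have h : 2 * a * ∫ x : ℝ, x ^ 3 * exp (-a * x ^ 2) = 0 := by linarith [hz]
  exact (mul_eq_zero.mp h).resolve_left (by positivity)

lemma my_gauss_poly_moment {a : ℝ} (ha : 0 < a) (A B C D : ℝ) :
    ∫ y : ℝ, (A + B * y + C * y ^ 2 + D * y ^ 3) * exp (-a * y ^ 2)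
      = (A + C / (2 * a)) * Real.sqrt (π / a) := by
  have h0 : Integrable fun x : ℝ => A * exp (-a * x ^ 2) :=
    (integrable_exp_neg_mul_sq ha).const_mul _
  have h1 : Integrable fun x : ℝ => B * (x * exp (-a * x ^ 2)) :=
    Integrable.const_mul (by simpa using my_integrable_pow_mul_gauss ha 1) _
  have h2 : Integrable fun x : ℝ => C * (x ^ 2 * exp (-a * x ^ 2)) :=
    (my_integrable_pow_mul_gauss ha 2).const_mul _
  have h3 : Integrable fun x : ℝ => D * (x ^ 3 * exp (-a * x ^ 2)) :=
    (my_integrable_pow_mul_gauss ha 3).const_mul _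
  have heq : (fun y : ℝ => (A + B * y + C * y ^ 2 + D * y ^ 3) * exp (-a * y ^ 2))
      = fun y : ℝ => A * exp (-a * y ^ 2) + B * (y * exp (-a * y ^ 2))
        + C * (y ^ 2 * exp (-a * y ^ 2)) + D * (y ^ 3 * exp (-a * y ^ 2)) := by
    funext y; ring
  have h01 : Integrable (fun x : ℝ => A * exp (-a * x ^ 2) + B * (x * exp (-a * x ^ 2))) :=
    h0.add h1
  have h012 : Integrable (fun x : ℝ => A * exp (-a * x ^ 2) + B * (x * exp (-a * x ^ 2))
      + C * (x ^ 2 * exp (-a * x ^ 2))) := h01.add h2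
  rw [heq]
  rw [integral_add h012 h3, integral_add h01 h2,
    integral_add h0 h1, integral_const_mul, integral_const_mul, integral_const_mul,
    integral_const_mul, integral_gaussian, my_gauss_moment_one ha, my_gauss_moment_two ha,
    my_gauss_moment_three ha]
  ring


/-- Mixed second moment `E[G(t)·G'"'"'(t)]` for
`G(t) = (t−X)e^(−(β/2)(t−X)²)`, `G'"'"'(t) = (1−β(t−X)²)e^(−(β/2)(t−X)²)`,
`X ~ N(0,1)`. -/
theorem gaussian_kde_mixed_second_moment (β : ℝ) (hβ : 0 < β) (t : ℝ) :
    ∫ x, (t - x) * (1 - β * (t - x) ^ 2) * Real.exp (-β * (t - x) ^ 2)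
        ∂(gaussianReal 0 1) =
      t * (1 + β - β * t ^ 2 - 2 * β ^ 2) * Real.exp (-β * t ^ 2 / (2 * β + 1)) *
        (2 * β + 1) ^ (-(7 : ℝ) / 2) := by
  have hs : (0:ℝ) < 2 * β + 1 := by linarith
  have hs' : (2 * β + 1 : ℝ) ≠ 0 := ne_of_gt hs
  have ha : (0:ℝ) < (2 * β + 1) / 2 := by linarith
  set m : ℝ := 2 * β * t / (2 * β + 1) with hm
  rw [my_integral_gaussianReal]
  rw [← integral_add_right_eq_self
    (fun x => gaussianPDFReal 0 1 x *
      ((t - x) * (1 - β * (t - x) ^ 2) * Real.exp (-β * (t - x) ^ 2))) m]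
  have hpt : ∀ y : ℝ, gaussianPDFReal 0 1 (y + m) *
      ((t - (y + m)) * (1 - β * (t - (y + m)) ^ 2) * Real.exp (-β * (t - (y + m)) ^ 2))
      = ((Real.sqrt (2 * π))⁻¹ * Real.exp (-β * t ^ 2 / (2 * β + 1))) *
        (((t / (2 * β + 1) - β * (t / (2 * β + 1)) ^ 3)
          + (3 * β * (t / (2 * β + 1)) ^ 2 - 1) * y
          + (-(3 * β * (t / (2 * β + 1)))) * y ^ 2 + β * y ^ 3)
          * Real.exp (-((2 * β + 1) / 2) * y ^ 2)) := by
    intro y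
    have hpdf : gaussianPDFReal 0 1 (y + m)
        = (Real.sqrt (2 * π))⁻¹ * Real.exp (-(y + m) ^ 2 / 2) := by
      simp [gaussianPDFReal]
    have hexp : Real.exp (-(y + m) ^ 2 / 2) * Real.exp (-β * (t - (y + m)) ^ 2)
        = Real.exp (-β * t ^ 2 / (2 * β + 1)) * Real.exp (-((2 * β + 1) / 2) * y ^ 2) := by
      rw [← Real.exp_add, ← Real.exp_add]
      congr 1
      rw [hm]
      field_simp
      ring
    have hpoly : (t - (y + m)) * (1 - β * (t - (y + m)) ^ 2)
        = (t / (2 * β + 1) - β * (t / (2 * β + 1)) ^ 3)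
          + (3 * β * (t / (2 * β + 1)) ^ 2 - 1) * y
          + (-(3 * β * (t / (2 * β + 1)))) * y ^ 2 + β * y ^ 3 := by
      rw [hm]
      field_simp
      ring
    calc gaussianPDFReal 0 1 (y + m) *
        ((t - (y + m)) * (1 - β * (t - (y + m)) ^ 2) * Real.exp (-β * (t - (y + m)) ^ 2))
        = (Real.sqrt (2 * π))⁻¹ * ((t - (y + m)) * (1 - β * (t - (y + m)) ^ 2)) *
          (Real.exp (-(y + m) ^ 2 / 2) * Real.exp (-β * (t - (y + m)) ^ 2)) := by
          rw [hpdf]; ring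
      _ = _ := by rw [hexp, hpoly]; ring
  simp only [hpt]
  rw [integral_const_mul, my_gauss_poly_moment ha]
  have hsq : Real.sqrt (π / ((2 * β + 1) / 2)) = Real.sqrt (2 * π) / Real.sqrt (2 * β + 1) := by
    rw [show π / ((2 * β + 1) / 2) = 2 * π / (2 * β + 1) by field_simp]
    exact Real.sqrt_div (by positivity) _
  have hrs : (2 * β + 1 : ℝ) ^ (-(7 : ℝ) / 2)
      = ((2 * β + 1) ^ 3 * Real.sqrt (2 * β + 1))⁻¹ := by
    rw [show (-(7 : ℝ) / 2) = -((3:ℕ) + (1/2 : ℝ)) by norm_num, Real.rpow_neg hs.le,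
      Real.rpow_add hs, Real.rpow_natCast, ← Real.sqrt_eq_rpow]
  rw [hsq, hrs]
  have h2π : Real.sqrt (2 * π) ≠ 0 := by positivity
  have hss : Real.sqrt (2 * β + 1) ≠ 0 := by positivity
  field_simp
  ring
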